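/- Let X be a finite nonempty set and let p be a probability mass function on X with p(x) > 0 for all x ∈ X. Let Δ = {q : X → ℝ : q(x) ≥ 0 for all x, Σ_{x∈X} q(x) = 1} denote the probability simplex, viewed as a subset of the Euclidean space ℝ^X. Then the remainder q ↦ D(q‖p) − (1/2)·Σ_{x∈X} (q(x)−p(x))²/p(x) is o(‖q−p‖²) as q → p within Δ; that is, for every ε > 0 there exists δ > 0 such that every q ∈ Δ with ‖q−p‖ < δ satisfies |D(q‖p) − (1/2)·Σ_{x∈X} (q(x)−p(x))²/p(x)| ≤ ε·‖q−p‖². -/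

import Mathlib

open Finset

/-- Kullback–Leibler divergence between two functions on a finite type,
with the convention `0 * log 0 = 0` (automatic since `0 * x = 0` in `ℝ`). -/
noncomputable def klDiv {X : Type*} [Fintype X] (p q : X → ℝ) : ℝ :=
  ∑ x, p x * Real.log (p x / q x)

lemma aux_cubic (u : ℝ) (hu : |u| ≤ 1/2) : |(1+u) * Real.log (1+u) - u - u^2/2| ≤ 4 * |u|^3 := by
  have h1 : |(-u)| < 1 := by rw [abs_neg]; linarith
  have h2 := Real.abs_log_sub_add_sum_range_le h1 2
  have hs : (∑ i ∈ Finset.range 2, (-u) ^ (i + 1) / (i + 1)) = -u + u^2/2 := by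
    simp [Finset.sum_range_succ]; ring
  rw [hs] at h2
  have h3 : (1 : ℝ) - -u = 1 + u := by ring
  rw [h3] at h2
  set E := Real.log (1+u) - u + u^2/2 with hE
  have hE2 : -u + u^2/2 + Real.log (1+u) = E := by rw [hE]; ring
  rw [hE2] at h2
  have hE3 : |E| ≤ 2 * |u|^3 := by
    have h4 : (1:ℝ) - |-u| ≥ 1/2 := by rw [abs_neg]; linarith
    have h5 : |(-u)|^3 = |u|^3 := by rw [abs_neg]
    have hu3 : (0:ℝ) ≤ |u|^3 := by positivity
    calc |E| ≤ |(-u)|^3 / (1 - |-u|) := h2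
      _ = |u|^3 / (1 - |-u|) := by rw [h5]
      _ ≤ |u|^3 / (1/2) := by apply div_le_div_of_nonneg_left hu3 (by norm_num) h4
      _ = 2 * |u|^3 := by ring
  have hL : Real.log (1+u) = E + u - u^2/2 := by rw [hE]; ring
  rw [hL]
  have h6 : (1+u) * (E + u - u^2/2) - u - u^2/2 = (1+u)*E - u^3/2 := by ring
  rw [h6]
  have h7 : |(1+u)*E - u^3/2| ≤ |1 + u| * |E| + |u|^3/2 := by
    calc |(1+u)*E - u^3/2| ≤ |(1 + u) * E| + |u^3/2| := abs_sub _ _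
      _ = |1 + u| * |E| + |u|^3/2 := by rw [abs_mul, abs_div, abs_pow]; norm_num
  have h8 : |1+u| ≤ 3/2 := by
    rcases abs_le.mp hu with ⟨h,h'⟩
    rw [abs_le]; constructor <;> linarith
  have hEnn : 0 ≤ |E| := abs_nonneg _
  nlinarith [abs_nonneg u, pow_nonneg (abs_nonneg u) 3]

lemma aux_coord (a b : ℝ) (ha : 0 < a) (hab : |b - a| ≤ a/2) :
    |b * Real.log (b / a) - (b - a) - (b - a)^2/(2*a)| ≤ 4 * |b - a|^3 / a^2 := by
  set u := (b - a) / a with hudef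
  have hu : |u| ≤ 1/2 := by
    rw [hudef, abs_div, abs_of_pos ha, div_le_iff₀ ha]
    linarith
  have hb : b = a * (1 + u) := by
    rw [hudef, mul_add, mul_div_assoc', mul_comm a (b - a), mul_div_assoc, div_self ha.ne']; ring
  have hba : b / a = 1 + u := by rw [hb]; field_simp
  have hrw : b * Real.log (b / a) - (b - a) - (b - a)^2/(2*a)
      = a * ((1+u) * Real.log (1+u) - u - u^2/2) := by
    rw [hba, hb]
    field_simp [hudef]
    ring
  rw [hrw, abs_mul, abs_of_pos ha]
  have h1 := aux_cubic u hu
  have h2 : |u|^3 = |b - a|^3 / a^3 := by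
    rw [hudef, abs_div, abs_of_pos ha, div_pow]
  calc a * |(1+u) * Real.log (1+u) - u - u^2/2| ≤ a * (4 * |u|^3) := by
        exact mul_le_mul_of_nonneg_left h1 ha.le
    _ = 4 * |b - a|^3 / a^2 := by rw [h2]; field_simp

/-- Second-order expansion of the K-L divergence `D(q‖p)` in its first
argument: the remainder `D(q‖p) − (1/2)·Σ (q(x)−p(x))²/p(x)` is `o(‖q−p‖²)`
as `q → p` within the probability simplex, where `‖·‖` is the Euclidean norm
on `ℝ^X`. -/
theorem stmt_5 {X : Type*} [Fintype X] [Nonempty X]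
    (p : EuclideanSpace ℝ X) (hppos : ∀ x, 0 < p x) (hpsum : ∑ x, p x = 1) :
    ∀ ε > (0 : ℝ), ∃ δ > (0 : ℝ), ∀ q : EuclideanSpace ℝ X,
      (∀ x, 0 ≤ q x) → (∑ x, q x = 1) → ‖q - p‖ < δ →
      |klDiv q p - (1 / 2) * ∑ x, (q x - p x) ^ 2 / p x| ≤ ε * ‖q - p‖ ^ 2 := by
  classical
  intro ε hε
  set c : ℝ := Finset.univ.inf' Finset.univ_nonempty (fun x => p x) with hc
  have hcle : ∀ x, c ≤ p x := fun x => Finset.inf'_le _ (Finset.mem_univ x)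
  have hcpos : 0 < c := by
    rw [hc, Finset.lt_inf'_iff]
    exact fun x _ => hppos x
  refine ⟨min (c/2) (ε * c^2 / 4), by positivity, ?_⟩
  intro q hq hqsum hqnorm
  have habs : ∀ x, |q x - p x| ≤ ‖q - p‖ := by
    intro x
    have h1 : (q - p) x = q x - p x := rfl
    calc |q x - p x| = Real.sqrt ((q x - p x)^2) := (Real.sqrt_sq_eq_abs _).symm
      _ ≤ ‖q - p‖ := by
          rw [EuclideanSpace.norm_eq]
          apply Real.sqrt_le_sqrt
          calc (q x - p x)^2 = ‖(q - p) x‖^2 := by rw [h1, Real.norm_eq_abs, sq_abs]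
            _ ≤ ∑ y, ‖(q - p) y‖^2 := Finset.single_le_sum (f := fun y => ‖(q - p) y‖^2)
                (fun y _ => by positivity) (Finset.mem_univ x)
  have hnormsq : ‖q - p‖^2 = ∑ x, (q x - p x)^2 := by
    rw [EuclideanSpace.norm_eq, Real.sq_sqrt (by positivity)]
    exact Finset.sum_congr rfl fun x _ => by
      rw [show (q - p) x = q x - p x from rfl, Real.norm_eq_abs, sq_abs]
  have hkey : ∀ x, |q x * Real.log (q x / p x) - (q x - p x) - (q x - p x)^2/(2 * p x)|
      ≤ ε * (q x - p x)^2 := by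
    intro x
    have hd : |q x - p x| ≤ p x / 2 := by
      have := habs x
      have h2 : ‖q - p‖ < c/2 := lt_of_lt_of_le hqnorm (min_le_left _ _)
      have := hcle x
      linarith
    have h3 := aux_coord (p x) (q x) (hppos x) hd
    refine h3.trans ?_
    have hc2 : c^2 ≤ (p x)^2 := by nlinarith [hcle x, hcpos]
    have h4 : 4 * |q x - p x|^3 / (p x)^2 ≤ 4 * |q x - p x|^3 / c^2 := by
      apply div_le_div_of_nonneg_left (by positivity) (by positivity) hc2
    refine h4.trans ?_
    have h5 : |q x - p x|^3 = |q x - p x| * (q x - p x)^2 := by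
      rw [pow_succ, sq_abs]; ring
    rw [h5]
    have h6 : |q x - p x| ≤ ε * c^2 / 4 :=
      (habs x).trans (le_of_lt (lt_of_lt_of_le hqnorm (min_le_right _ _)))
    calc 4 * (|q x - p x| * (q x - p x)^2) / c^2
        ≤ 4 * (ε * c^2 / 4 * (q x - p x)^2) / c^2 := by
          apply div_le_div_of_nonneg_right ?_ (by positivity)
          have : (q x - p x)^2 ≥ 0 := by positivity
          nlinarith
      _ = ε * (q x - p x)^2 := by field_simp
  have hsumt : ∑ x, (q x - p x) = 0 := by
    rw [Finset.sum_sub_distrib, hqsum, hpsum]; ring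
  have hexpand : klDiv q p - (1 / 2) * ∑ x, (q x - p x) ^ 2 / p x
      = ∑ x, (q x * Real.log (q x / p x) - (q x - p x) - (q x - p x)^2/(2 * p x)) := by
    rw [Finset.sum_sub_distrib, Finset.sum_sub_distrib, hsumt, klDiv, Finset.mul_sum]
    congr 1
    · ring
    · exact Finset.sum_congr rfl fun x _ => by ring
  rw [hexpand]
  calc |∑ x, (q x * Real.log (q x / p x) - (q x - p x) - (q x - p x)^2/(2 * p x))|
      ≤ ∑ x, |q x * Real.log (q x / p x) - (q x - p x) - (q x - p x)^2/(2 * p x)| :=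
        Finset.abs_sum_le_sum_abs _ _
    _ ≤ ∑ x, ε * (q x - p x)^2 := Finset.sum_le_sum fun x _ => hkey x
    _ = ε * ‖q - p‖^2 := by rw [← Finset.mul_sum, hnormsq]
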